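/- arXiv:2105.14260 — 5 statements merged into one kernel-verified Lean document; each statement's English description precedes it below -/
import Mathlib

section
/- For random variables X and Y taking values in finite sets, if Y = (Y_1, ..., Y_n) is a vector of random variables such that Y_1, ..., Y_n are mutually independent conditional on X, then the mutual information satisfies I(X;Y) ≤ Σ_{i=1}^n I(X;Y_i). -/
open Finset

open Classical in
/-- Probability of an event under a probability mass function `p` on a finite sample space. -/
noncomputable def pr {Ω : Type*} [Fintype Ω] (p : Ω → ℝ) (s : Ω → Prop) : ℝ :=
  ∑ ω : Ω, if s ω then p ω else 0

/-- Mutual information `I(X;Z)` of discrete random variables on a finite probability space,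
with natural logarithm. -/
noncomputable def mutualInfo {Ω A C : Type*} [Fintype Ω] [Fintype A] [Fintype C]
    (p : Ω → ℝ) (X : Ω → A) (Z : Ω → C) : ℝ :=
  ∑ x : A, ∑ z : C,
    pr p (fun ω => X ω = x ∧ Z ω = z) *
      Real.log (pr p (fun ω => X ω = x ∧ Z ω = z) /
        (pr p (fun ω => X ω = x) * pr p (fun ω => Z ω = z)))

section PrLemmas

variable {Ω : Type*} [Fintype Ω] (p : Ω → ℝ)

open Classical in
lemma pr_nonneg (hp0 : ∀ ω, 0 ≤ p ω) (s : Ω → Prop) : 0 ≤ pr p s := by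
  unfold pr
  refine Finset.sum_nonneg fun ω _ => ?_
  split
  · exact hp0 ω
  · exact le_refl 0

open Classical in
lemma pr_congr {s t : Ω → Prop} (h : ∀ ω, s ω ↔ t ω) : pr p s = pr p t := by
  unfold pr
  exact Finset.sum_congr rfl fun ω _ => by simp [h ω]

open Classical in
lemma pr_mono (hp0 : ∀ ω, 0 ≤ p ω) {s t : Ω → Prop} (h : ∀ ω, s ω → t ω) :
    pr p s ≤ pr p t := by
  unfold pr
  refine Finset.sum_le_sum fun ω _ => ?_
  by_cases hs : s ω
  · simp [hs, h ω hs]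
  · simp only [hs, if_false]
    split
    · exact hp0 ω
    · exact le_refl 0

open Classical in
lemma pr_true (hp1 : ∑ ω : Ω, p ω = 1) : pr p (fun _ => True) = 1 := by
  unfold pr; simpa using hp1

lemma pr_le_one (hp0 : ∀ ω, 0 ≤ p ω) (hp1 : ∑ ω : Ω, p ω = 1) (s : Ω → Prop) :
    pr p s ≤ 1 := by
  calc pr p s ≤ pr p (fun _ => True) := pr_mono p hp0 fun ω _ => trivial
    _ = 1 := pr_true p hp1

open Classical in
lemma pr_sum_mul {C : Type*} [Fintype C] (s : Ω → Prop) (Z : Ω → C) (F : C → ℝ) :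
    ∑ z : C, pr p (fun ω => s ω ∧ Z ω = z) * F z
      = ∑ ω : Ω, (if s ω then p ω else 0) * F (Z ω) := by
  unfold pr
  simp_rw [Finset.sum_mul]
  rw [Finset.sum_comm]
  refine Finset.sum_congr rfl fun ω _ => ?_
  rw [Finset.sum_eq_single (Z ω)]
  · by_cases hs : s ω <;> simp [hs]
  · intro z _ hz
    simp [Ne.symm hz]
  · simp

open Classical in
lemma pr_sum_fiber {C : Type*} [Fintype C] (f : Ω → C) (s : Ω → Prop) :
    ∑ c : C, pr p (fun ω => f ω = c ∧ s ω) = pr p s := by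
  unfold pr
  rw [Finset.sum_comm]
  refine Finset.sum_congr rfl fun ω _ => ?_
  rw [Finset.sum_eq_single (f ω)]
  · by_cases hs : s ω <;> simp [hs]
  · intro z _ hz
    simp [Ne.symm hz]
  · simp

open Classical in
lemma pr_sum_eq {C : Type*} [Fintype C] (f : Ω → C) :
    ∑ c : C, pr p (fun ω => f ω = c) = ∑ ω : Ω, p ω := by
  unfold pr
  rw [Finset.sum_comm]
  refine Finset.sum_congr rfl fun ω _ => ?_
  rw [Finset.sum_eq_single (f ω)]
  · simp
  · intro z _ hz
    simp [Ne.symm hz]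
  · simp

end PrLemmas

set_option maxHeartbeats 1000000 in
theorem abstract_tensor {A B : Type*} [Fintype A] [Fintype B] (n : ℕ)
    (a : A → ℝ) (b : (Fin n → B) → ℝ) (bi : Fin n → B → ℝ)
    (q : A → (Fin n → B) → ℝ) (qi : Fin n → A → B → ℝ)
    (hq0 : ∀ x y, 0 ≤ q x y)
    (hqi0 : ∀ i x c, 0 ≤ qi i x c)
    (hbi0 : ∀ i c, 0 ≤ bi i c)
    (hb0 : ∀ y, 0 ≤ b y)
    (ha1 : ∀ x, a x ≤ 1)
    (hqa : ∀ x y, q x y ≤ a x)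
    (hqb : ∀ x y, q x y ≤ b y)
    (hbbi : ∀ y i, b y ≤ bi i (y i))
    (hmargq : ∀ y, ∑ x, q x y = b y)
    (hb1 : ∑ y, b y = 1)
    (hbi1 : ∀ i, ∑ c, bi i c = 1)
    (hfiber : ∀ i x (F : B → ℝ), ∑ c, qi i x c * F c = ∑ y, q x y * F (y i))
    (hind : ∀ x y, a x ^ (n-1) * q x y = ∏ i, qi i x (y i)) :
    ∑ x, ∑ y, q x y * Real.log (q x y / (a x * b y)) ≤
      ∑ i, ∑ x, ∑ c, qi i x c * Real.log (qi i x c / (a x * bi i c)) := by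
  have stepA : ∑ i, ∑ x, ∑ c, qi i x c * Real.log (qi i x c / (a x * bi i c))
      = ∑ x, ∑ y, q x y * ∑ i, Real.log (qi i x (y i) / (a x * bi i (y i))) := by
    rw [Finset.sum_comm]
    refine Finset.sum_congr rfl fun x _ => ?_
    calc ∑ i, ∑ c, qi i x c * Real.log (qi i x c / (a x * bi i c))
        = ∑ i, ∑ y, q x y * Real.log (qi i x (y i) / (a x * bi i (y i))) :=
          Finset.sum_congr rfl fun i _ => hfiber i x _
      _ = ∑ y, ∑ i, q x y * Real.log (qi i x (y i) / (a x * bi i (y i))) := Finset.sum_comm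
      _ = ∑ y, q x y * ∑ i, Real.log (qi i x (y i) / (a x * bi i (y i))) := by
          simp [Finset.mul_sum]
  have key : ∀ x y, q x y * Real.log (q x y / (a x * b y))
      - q x y * ∑ i, Real.log (qi i x (y i) / (a x * bi i (y i)))
      = q x y * ((∑ i, Real.log (bi i (y i))) - Real.log (b y)) := by
    intro x y
    rcases eq_or_lt_of_le (hq0 x y) with h0 | hpos
    · simp [← h0]
    · have ha : 0 < a x := lt_of_lt_of_le hpos (hqa x y)
      have hb : 0 < b y := lt_of_lt_of_le hpos (hqb x y)
      have hbi : ∀ i, 0 < bi i (y i) := fun i => lt_of_lt_of_le hb (hbbi y i)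
      have hqi : ∀ i, 0 < qi i x (y i) := by
        intro i
        rcases (hqi0 i x (y i)).lt_or_eq with h | h
        · exact h
        · exfalso
          have hz : (∏ j, qi j x (y j)) = 0 :=
            Finset.prod_eq_zero (Finset.mem_univ i) h.symm
          have hpos2 : 0 < a x ^ (n-1) * q x y := mul_pos (pow_pos ha (n-1)) hpos
          rw [hind x y] at hpos2
          linarith
      rw [← mul_sub]
      congr 1
      have e1 : Real.log (q x y / (a x * b y))
          = Real.log (q x y) - Real.log (a x) - Real.log (b y) := by
        rw [Real.log_div hpos.ne' (mul_pos ha hb).ne', Real.log_mul ha.ne' hb.ne']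
        ring
      have hlogs : ∑ i, Real.log (qi i x (y i))
          = ((n-1 : ℕ) : ℝ) * Real.log (a x) + Real.log (q x y) := by
        rw [← Real.log_prod (fun i _ => (hqi i).ne'), ← hind x y,
          Real.log_mul (pow_pos ha (n-1)).ne' hpos.ne', Real.log_pow]
      have e2 : ∑ i, Real.log (qi i x (y i) / (a x * bi i (y i)))
          = (((n-1:ℕ):ℝ) * Real.log (a x) + Real.log (q x y)) - (n : ℝ) * Real.log (a x)
              - ∑ i, Real.log (bi i (y i)) := by
        have hterm : ∀ i, Real.log (qi i x (y i) / (a x * bi i (y i)))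
            = Real.log (qi i x (y i)) - Real.log (a x) - Real.log (bi i (y i)) := fun i => by
          rw [Real.log_div (hqi i).ne' (mul_pos ha (hbi i)).ne', Real.log_mul ha.ne' (hbi i).ne']
          ring
        simp only [hterm, Finset.sum_sub_distrib, hlogs, Finset.sum_const, Finset.card_univ,
          Fintype.card_fin, nsmul_eq_mul]
      rw [e1, e2]
      rcases Nat.eq_zero_or_pos n with hn | hn
      · subst hn
        have hq1 : q x y = 1 := by
          have := hind x y
          simpa using this
        have ha1' : a x = 1 := le_antisymm (ha1 x) (hq1 ▸ hqa x y)
        simp [ha1']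
      · have : ((n - 1 : ℕ) : ℝ) = (n : ℝ) - 1 := by
          rw [Nat.cast_sub hn]; simp
        rw [this]
        ring
  have stepC : ∑ x, ∑ y, q x y * ((∑ i, Real.log (bi i (y i))) - Real.log (b y))
      = ∑ y, b y * ((∑ i, Real.log (bi i (y i))) - Real.log (b y)) := by
    rw [Finset.sum_comm]
    exact Finset.sum_congr rfl fun y _ => by rw [← Finset.sum_mul, hmargq]
  have stepD : ∑ y, b y * ((∑ i, Real.log (bi i (y i))) - Real.log (b y)) ≤ 0 := by
    have bound : ∀ y, b y * ((∑ i, Real.log (bi i (y i))) - Real.log (b y))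
        ≤ (∏ i, bi i (y i)) - b y := by
      intro y
      rcases eq_or_lt_of_le (hb0 y) with h0 | hb
      · rw [← h0]
        simpa using Finset.prod_nonneg fun i _ => hbi0 i (y i)
      · have hbi : ∀ i, 0 < bi i (y i) := fun i => lt_of_lt_of_le hb (hbbi y i)
        have hP : 0 < ∏ i, bi i (y i) := Finset.prod_pos fun i _ => hbi i
        have hlogeq : (∑ i, Real.log (bi i (y i))) - Real.log (b y)
            = Real.log ((∏ i, bi i (y i)) / b y) := by
          rw [Real.log_div hP.ne' hb.ne', Real.log_prod fun i _ => (hbi i).ne']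
        rw [hlogeq]
        have hlog := Real.log_le_sub_one_of_pos (div_pos hP hb)
        calc b y * Real.log ((∏ i, bi i (y i)) / b y)
            ≤ b y * ((∏ i, bi i (y i)) / b y - 1) :=
              mul_le_mul_of_nonneg_left hlog hb.le
          _ = (∏ i, bi i (y i)) - b y := by field_simp
    calc ∑ y : Fin n → B, b y * ((∑ i, Real.log (bi i (y i))) - Real.log (b y))
        ≤ ∑ y : Fin n → B, ((∏ i, bi i (y i)) - b y) := Finset.sum_le_sum fun y _ => bound y
      _ = (∑ y : Fin n → B, ∏ i, bi i (y i)) - ∑ y : Fin n → B, b y := by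
          rw [Finset.sum_sub_distrib]
      _ = 1 - 1 := by
          rw [hb1]
          congr 1
          calc ∑ y : Fin n → B, ∏ i, bi i (y i)
              = ∏ i, ∑ c, bi i c := by
                rw [Finset.prod_univ_sum, Fintype.piFinset_univ]
            _ = 1 := Finset.prod_eq_one fun i _ => hbi1 i
      _ = 0 := by ring
  rw [stepA, ← sub_nonpos]
  have hmain : (∑ x, ∑ y, q x y * Real.log (q x y / (a x * b y)))
      - (∑ x, ∑ y, q x y * ∑ i, Real.log (qi i x (y i) / (a x * bi i (y i))))
      = ∑ y, b y * ((∑ i, Real.log (bi i (y i))) - Real.log (b y)) := by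
    rw [← Finset.sum_sub_distrib, ← stepC]
    refine Finset.sum_congr rfl fun x _ => ?_
    rw [← Finset.sum_sub_distrib]
    exact Finset.sum_congr rfl fun y _ => key x y
  rw [hmain]
  exact stepD

/-- Tensorization of mutual information: if `Y = (Y_1, ..., Y_n)` are mutually independent
conditional on `X`, then `I(X;Y) ≤ ∑ i, I(X;Y_i)`. -/
theorem stmt0 {Ω A B : Type*} [Fintype Ω] [Fintype A] [Fintype B] (n : ℕ)
    (p : Ω → ℝ) (hp0 : ∀ ω, 0 ≤ p ω) (hp1 : ∑ ω : Ω, p ω = 1)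
    (X : Ω → A) (Y : Fin n → Ω → B)
    (hindep : ∀ (x : A) (y : Fin n → B),
      pr p (fun ω => X ω = x) ^ (n - 1) *
          pr p (fun ω => X ω = x ∧ ∀ i, Y i ω = y i) =
        ∏ i : Fin n, pr p (fun ω => X ω = x ∧ Y i ω = y i)) :
    mutualInfo p X (fun ω i => Y i ω) ≤ ∑ i : Fin n, mutualInfo p X (Y i) := by
  have hfun : ∀ (x : A) (y : Fin n → B),
      pr p (fun ω => X ω = x ∧ (fun i => Y i ω) = y)
        = pr p (fun ω => X ω = x ∧ ∀ i, Y i ω = y i) :=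
    fun x y => pr_congr p fun ω => by rw [funext_iff]
  unfold mutualInfo
  exact abstract_tensor n (fun x => pr p (fun ω => X ω = x))
    (fun y => pr p (fun ω => (fun i => Y i ω) = y))
    (fun i c => pr p (fun ω => Y i ω = c))
    (fun x y => pr p (fun ω => X ω = x ∧ (fun i => Y i ω) = y))
    (fun i x c => pr p (fun ω => X ω = x ∧ Y i ω = c))
    (fun x y => pr_nonneg p hp0 _)
    (fun i x c => pr_nonneg p hp0 _)
    (fun i c => pr_nonneg p hp0 _)
    (fun y => pr_nonneg p hp0 _)
    (fun x => pr_le_one p hp0 hp1 _)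
    (fun x y => pr_mono p hp0 fun ω h => h.1)
    (fun x y => pr_mono p hp0 fun ω h => h.2)
    (fun y i => pr_mono p hp0 fun ω h => congrFun h i)
    (fun y => pr_sum_fiber p X _)
    (by rw [pr_sum_eq p]; exact hp1)
    (fun i => by rw [pr_sum_eq p]; exact hp1)
    (fun i x F => by
      rw [pr_sum_mul p (fun ω => X ω = x) (Y i) F,
        pr_sum_mul p (fun ω => X ω = x) (fun ω j => Y j ω) (fun y => F (y i))])
    (fun x y => by
      show pr p (fun ω => X ω = x) ^ (n-1) * pr p (fun ω => X ω = x ∧ (fun i => Y i ω) = y)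
        = ∏ i, pr p (fun ω => X ω = x ∧ Y i ω = y i)
      rw [hfun x y]; exact hindep x y)
end

section
/- Let G = (V,E) be a directed graph and U the set of vertices without self-loops. If S ⊆ U is a vertex packing set (i.e., for every vertex i ∈ V, |N_out(i) ∩ S| ≤ 1), then there exists a subset H ⊆ S such that H is an independent set, every vertex v ∈ V has |N_out(v) ∩ H| ≤ 1, and |H| ≥ |S|/3. -/
open Finset

lemma stmt1_aux {V : Type*} [Fintype V] [DecidableEq V] (E : V → V → Prop) [DecidableRel E] :
    ∀ (n : ℕ) (S : Finset V), S.card = n →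
      (∀ j ∈ S, ¬ E j j) →
      (∀ i ∈ S, (S.filter (fun u => E i u)).card ≤ 1) →
      ∃ H ⊆ S, (∀ u ∈ H, ∀ v ∈ H, ¬ E u v) ∧ S.card ≤ 3 * H.card := by
  intro n
  induction n using Nat.strong_induction_on with
  | _ n ih =>
    intro S hcard hU hpack
    rcases S.eq_empty_or_nonempty with rfl | hne
    · exact ⟨∅, Finset.Subset.refl _, by simp, by simp⟩
    · -- find a vertex of total degree ≤ 2
      have hsum : ∑ v ∈ S, ((S.filter (fun u => E v u)).card
          + (S.filter (fun u => E u v)).card) ≤ 2 * S.card := by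
        rw [Finset.sum_add_distrib, two_mul]
        have h1 : ∑ v ∈ S, (S.filter (fun u => E v u)).card ≤ S.card := by
          calc ∑ v ∈ S, (S.filter (fun u => E v u)).card
              ≤ ∑ v ∈ S, 1 := Finset.sum_le_sum (fun v hv => hpack v hv)
            _ = S.card := by simp
        have h2 : ∑ v ∈ S, (S.filter (fun u => E u v)).card
            = ∑ v ∈ S, (S.filter (fun u => E v u)).card := by
          simp only [Finset.card_filter]
          rw [Finset.sum_comm]
        omega
      have hex : ∃ v ∈ S, (S.filter (fun u => E v u)).card
          + (S.filter (fun u => E u v)).card ≤ 2 := by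
        by_contra hcon
        push_neg at hcon
        have : 3 * S.card ≤ ∑ v ∈ S, ((S.filter (fun u => E v u)).card
            + (S.filter (fun u => E u v)).card) := by
          calc 3 * S.card = ∑ _v ∈ S, 3 := by simp [mul_comm]
            _ ≤ _ := Finset.sum_le_sum (fun v hv => hcon v hv)
        have hpos : 0 < S.card := Finset.card_pos.mpr hne
        omega
      obtain ⟨v, hvS, hvdeg⟩ := hex
      set N : Finset V := S.filter (fun u => E v u ∨ E u v) with hN
      have hNcard : N.card ≤ 2 := by
        have : N ⊆ S.filter (fun u => E v u) ∪ S.filter (fun u => E u v) := by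
          intro x hx
          simp only [hN, Finset.mem_filter, Finset.mem_union] at hx ⊢
          tauto
        calc N.card ≤ _ := Finset.card_le_card this
          _ ≤ _ := Finset.card_union_le _ _
          _ ≤ 2 := hvdeg
      set T : Finset V := insert v N with hT
      set S' : Finset V := S \ T with hS'
      have hvT : v ∈ T := Finset.mem_insert_self _ _
      have hS'sub : S' ⊆ S := Finset.sdiff_subset
      have hvS' : v ∉ S' := by simp [hS', hvT]
      have hS'lt : S'.card < n := by
        rw [← hcard]
        exact Finset.card_lt_card (Finset.ssubset_iff_of_subset hS'sub |>.mpr ⟨v, hvS, hvS'⟩)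
      obtain ⟨H', hH'sub, hH'ind, hH'card⟩ := ih S'.card hS'lt S' rfl
        (fun j hj => hU j (hS'sub hj))
        (fun i hi => le_trans (Finset.card_le_card
          (Finset.filter_subset_filter _ hS'sub)) (hpack i (hS'sub hi)))
      refine ⟨insert v H', ?_, ?_, ?_⟩
      · intro x hx
        rcases Finset.mem_insert.mp hx with rfl | hx
        · exact hvS
        · exact hS'sub (hH'sub hx)
      · intro a ha b hb
        have hnotN : ∀ w ∈ H', ¬ (E v w ∨ E w v) := by
          intro w hw hc
          have hwS' := hH'sub hw
          have : w ∈ N := by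
            simp only [hN, Finset.mem_filter]
            exact ⟨hS'sub hwS', hc⟩
          have : w ∈ T := Finset.mem_insert_of_mem this
          simp [hS', this] at hwS'
        intro hE
        rcases Finset.mem_insert.mp ha with ha' | ha <;>
          rcases Finset.mem_insert.mp hb with hb' | hb
        · rw [ha', hb'] at hE; exact hU v hvS hE
        · rw [ha'] at hE; exact hnotN b hb (Or.inl hE)
        · rw [hb'] at hE; exact hnotN a ha (Or.inr hE)
        · exact hH'ind a ha b hb hE
      · have hvH' : v ∉ H' := fun h => hvS' (hH'sub h)
        rw [Finset.card_insert_of_notMem hvH']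
        have hScard : S.card ≤ S'.card + 3 := by
          have h1 : S.card ≤ S'.card + (S ∩ T).card := by
            rw [hS', Finset.card_sdiff_add_card_inter]
          have h2 : (S ∩ T).card ≤ T.card := Finset.card_le_card (Finset.inter_subset_right)
          have h3 : T.card ≤ 3 := by
            calc T.card ≤ N.card + 1 := Finset.card_insert_le _ _
              _ ≤ 3 := by omega
          omega
        omega

/-- From any vertex packing set `S` (a set of vertices without self-loops such that every vertex
has at most one out-neighbor in `S`) one can extract a `1`-packing independent set `H ⊆ S`
with `|H| ≥ |S|/3`. -/
theorem stmt1 {V : Type*} [Fintype V] [DecidableEq V] (E : V → V → Prop) [DecidableRel E]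
    (S : Finset V)
    (hU : ∀ j ∈ S, ¬ E j j)
    (hpack : ∀ i : V, (S.filter (fun u => E i u)).card ≤ 1) :
    ∃ H ⊆ S, (∀ u ∈ H, ∀ v ∈ H, ¬ E u v) ∧
      (∀ i : V, (H.filter (fun u => E i u)).card ≤ 1) ∧
      S.card ≤ 3 * H.card := by
  obtain ⟨H, hHsub, hHind, hHcard⟩ :=
    stmt1_aux E S.card S rfl hU (fun i _ => hpack i)
  exact ⟨H, hHsub, hHind,
    fun i => le_trans (Finset.card_le_card (Finset.filter_subset_filter _ hHsub)) (hpack i),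
    hHcard⟩
end

section
/- Let J be uniform on [n] and, conditional on J = j, let w be a Bernoulli random variable with mean 1/2 − ε if the coordinate index equals j and mean 1/2 otherwise. Then the mutual information between J and a single Bernoulli observation w_i (at a fixed coordinate i) satisfies I(J; w_i) ≤ 8ε²/n, for 0 < ε ≤ 1/4. -/
open Finset

private lemma aux_term (N c q : ℝ) (hN : N ≠ 0) (hq : q ≠ 0) :
    ((1/N)*c)^2 / ((1/N)*q) = (c^2/q)/N := by
  field_simp

private lemma aux_combine (N ε q1 q2 : ℝ) (hN : N ≠ 0) (h1 : q1 ≠ 0) (h2 : q2 ≠ 0) :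
    ((1/2-ε)^2/q1 + (1/2+ε)^2/q2)/N + (N-1) * (((1/4)/q1 + (1/4)/q2)/N)
      = ((N/4 - ε + ε^2)/q1 + (N/4 + ε + ε^2)/q2)/N := by
  field_simp
  ring

private lemma aux_final (N ε : ℝ) (hN : 2 ≤ N) (hε : 0 < ε) (hε' : ε ≤ 1/4) :
    ((N/4 - ε + ε^2)/(1/2 - ε/N) + (N/4 + ε + ε^2)/(1/2 + ε/N))/N - 1 ≤ 8*ε^2/N := by
  have hNpos : (0:ℝ) < N := by linarith
  have hd1 : (0:ℝ) < N - 2*ε := by linarith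
  have hd2 : (0:ℝ) < N + 2*ε := by linarith
  have e1 : 1/2 - ε/N = (N - 2*ε)/(2*N) := by field_simp
  have e2 : 1/2 + ε/N = (N + 2*ε)/(2*N) := by field_simp
  have hε2 : ε^2 ≤ 1/16 := by nlinarith
  have hX : (N/4 - ε + ε^2)/(1/2 - ε/N) + (N/4 + ε + ε^2)/(1/2 + ε/N) ≤ N + 8*ε^2 := by
    rw [e1, e2, div_div_eq_mul_div, div_div_eq_mul_div,
      div_add_div _ _ (ne_of_gt hd1) (ne_of_gt hd2), div_le_iff₀ (mul_pos hd1 hd2)]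
    nlinarith [sq_nonneg ε, sq_nonneg (N*ε), mul_pos hNpos hNpos,
      mul_le_mul_of_nonneg_left hε2 (sq_nonneg ε),
      mul_le_mul_of_nonneg_right (show (2:ℝ) ≤ N from hN) (sq_nonneg ε)]
  have h2' : ((N/4 - ε + ε^2)/(1/2 - ε/N) + (N/4 + ε + ε^2)/(1/2 + ε/N))/N
      ≤ (N + 8*ε^2)/N := by
    gcongr
  have e3 : (N + 8*ε^2)/N - 1 = 8*ε^2/N := by field_simp; ring
  linarith

/-- Let `J` be uniform on `[n]` and let `w` be a Bernoulli observation at a fixed coordinate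
`i`, with `P(w = 1 | J = j) = 1/2 - ε` if `j = i` and `1/2` otherwise (stated via the joint
probabilities). Then `I(J; w) ≤ 8ε²/n` for `0 < ε ≤ 1/4`. -/
theorem stmt11 {Ω : Type*} [Fintype Ω] (n : ℕ) (hn : 2 ≤ n)
    (p : Ω → ℝ) (hp0 : ∀ ω, 0 ≤ p ω) (hp1 : ∑ ω : Ω, p ω = 1)
    (J : Ω → Fin n) (hunif : ∀ j : Fin n, pr p (fun ω => J ω = j) = 1 / n)
    (i : Fin n) (w : Ω → Bool) (ε : ℝ) (hε : 0 < ε) (hε' : ε ≤ 1 / 4)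
    (hw : ∀ j : Fin n, pr p (fun ω => J ω = j ∧ w ω = true) =
      if j = i then (1 / n) * (1 / 2 - ε) else (1 / n) * (1 / 2)) :
    mutualInfo p J w ≤ 8 * ε ^ 2 / n := by
  classical
  have hN : (2:ℝ) ≤ (n:ℝ) := by exact_mod_cast hn
  have hNpos : (0:ℝ) < (n:ℝ) := by linarith
  have hn0 : (n:ℝ) ≠ 0 := ne_of_gt hNpos
  have hinv : (0:ℝ) < 1/(n:ℝ) := by positivity
  have hsplit : ∀ j : Fin n,
      pr p (fun ω => J ω = j ∧ w ω = true) + pr p (fun ω => J ω = j ∧ w ω = false)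
        = pr p (fun ω => J ω = j) := by
    intro j
    unfold pr
    rw [← Finset.sum_add_distrib]
    apply Finset.sum_congr rfl
    intro ω _
    by_cases h : J ω = j <;> cases hb : w ω <;> simp [h, hb]
  have hwf : ∀ j : Fin n, pr p (fun ω => J ω = j ∧ w ω = false) =
      if j = i then (1 / n) * (1 / 2 + ε) else (1 / n) * (1 / 2) := by
    intro j
    have hs := hsplit j
    rw [hw j, hunif j] at hs
    by_cases h : j = i
    · rw [if_pos h] at hs ⊢
      linear_combination hs
    · rw [if_neg h] at hs ⊢
      linear_combination hs
  have hmarg : ∀ b : Bool, pr p (fun ω => w ω = b)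
      = ∑ j : Fin n, pr p (fun ω => J ω = j ∧ w ω = b) := by
    intro b
    unfold pr
    rw [Finset.sum_comm]
    apply Finset.sum_congr rfl
    intro ω _
    by_cases hb : w ω = b <;> simp [hb]
  have sumite : ∀ A B : ℝ, ∑ j : Fin n, (if j = i then A else B) = A + ((n:ℝ) - 1) * B := by
    intro A B
    have h : ∀ j : Fin n, (if j = i then A else B) = B + (if j = i then A - B else 0) := by
      intro j; split <;> ring
    simp_rw [h, Finset.sum_add_distrib, Finset.sum_const, Finset.sum_ite_eq' Finset.univ i
      (fun _ => A - B), Finset.mem_univ, if_true, Finset.card_univ, Fintype.card_fin,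
      nsmul_eq_mul]
    ring
  have hqt : pr p (fun ω => w ω = true) = 1 / 2 - ε / n := by
    rw [hmarg true]
    simp_rw [hw]
    rw [sumite]
    have h : (n:ℝ) * (1/(n:ℝ)) = 1 := by field_simp
    linear_combination (1/2 : ℝ) * h
  have hqf : pr p (fun ω => w ω = false) = 1 / 2 + ε / n := by
    rw [hmarg false]
    simp_rw [hwf]
    rw [sumite]
    have h : (n:ℝ) * (1/(n:ℝ)) = 1 := by field_simp
    linear_combination (1/2 : ℝ) * h
  have hεn : ε / n ≤ 1 / 8 := by
    rw [div_le_iff₀ hNpos]; nlinarith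
  have hqt_pos : (0:ℝ) < 1 / 2 - ε / n := by
    have : 0 < ε / n := div_pos hε hNpos
    linarith
  have hqf_pos : (0:ℝ) < 1 / 2 + ε / n := by
    have : 0 < ε / n := div_pos hε hNpos
    linarith
  have hjpos : ∀ (j : Fin n) (b : Bool), 0 < pr p (fun ω => J ω = j ∧ w ω = b) := by
    intro j b
    cases b
    · rw [hwf j]
      split
      · exact mul_pos hinv (by linarith)
      · exact mul_pos hinv (by linarith)
    · rw [hw j]
      split
      · exact mul_pos hinv (by linarith)
      · exact mul_pos hinv (by linarith)
  have key : mutualInfo p J w ≤ ∑ x : Fin n, ∑ z : Bool,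
      (pr p (fun ω => J ω = x ∧ w ω = z)) ^ 2 /
        (pr p (fun ω => J ω = x) * pr p (fun ω => w ω = z))
      - ∑ x : Fin n, ∑ z : Bool, pr p (fun ω => J ω = x ∧ w ω = z) := by
    rw [← Finset.sum_sub_distrib]
    unfold mutualInfo
    apply Finset.sum_le_sum
    intro x _
    rw [← Finset.sum_sub_distrib]
    apply Finset.sum_le_sum
    intro z _
    set f := pr p (fun ω => J ω = x ∧ w ω = z) with hf
    have hfpos := hjpos x z
    have hpq : 0 < pr p (fun ω => J ω = x) * pr p (fun ω => w ω = z) := by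
      rw [hunif x]
      apply mul_pos hinv
      cases z
      · rw [hqf]; linarith
      · rw [hqt]; linarith
    have hlog := Real.log_le_sub_one_of_pos (div_pos hfpos hpq)
    calc f * Real.log (f / (pr p (fun ω => J ω = x) * pr p (fun ω => w ω = z)))
        ≤ f * (f / (pr p (fun ω => J ω = x) * pr p (fun ω => w ω = z)) - 1) :=
          mul_le_mul_of_nonneg_left hlog (le_of_lt hfpos)
      _ = f ^ 2 / (pr p (fun ω => J ω = x) * pr p (fun ω => w ω = z)) - f := by
          field_simp
  have hsum1 : ∑ x : Fin n, ∑ z : Bool, pr p (fun ω => J ω = x ∧ w ω = z) = 1 := by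
    have h : ∀ x : Fin n, ∑ z : Bool, pr p (fun ω => J ω = x ∧ w ω = z) = 1 / n := by
      intro x
      rw [Fintype.sum_bool, ← hunif x, ← hsplit x]
    simp_rw [h, Finset.sum_const, Finset.card_univ, Fintype.card_fin, nsmul_eq_mul]
    field_simp
  have hchi : ∑ x : Fin n, ∑ z : Bool,
      (pr p (fun ω => J ω = x ∧ w ω = z)) ^ 2 /
        (pr p (fun ω => J ω = x) * pr p (fun ω => w ω = z))
      = (((n:ℝ)/4 - ε + ε^2) / (1/2 - ε/n) + ((n:ℝ)/4 + ε + ε^2) / (1/2 + ε/n)) / n := by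
    have hterm : ∀ x : Fin n, ∑ z : Bool,
        (pr p (fun ω => J ω = x ∧ w ω = z)) ^ 2 /
          (pr p (fun ω => J ω = x) * pr p (fun ω => w ω = z))
        = if x = i then
            ((1/2-ε)^2 / (1/2 - ε/n) + (1/2+ε)^2 / (1/2 + ε/n)) / n
          else
            ((1/4) / (1/2 - ε/n) + (1/4) / (1/2 + ε/n)) / n := by
      intro x
      rw [Fintype.sum_bool, hw x, hwf x, hunif x, hqt, hqf]
      by_cases h : x = i
      · rw [if_pos h, if_pos h, if_pos h,
          aux_term _ _ _ hn0 (ne_of_gt hqt_pos), aux_term _ _ _ hn0 (ne_of_gt hqf_pos),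
          ← add_div]
      · rw [if_neg h, if_neg h, if_neg h,
          aux_term _ _ _ hn0 (ne_of_gt hqt_pos), aux_term _ _ _ hn0 (ne_of_gt hqf_pos)]
        have h14 : ((1:ℝ)/2)^2 = 1/4 := by norm_num
        rw [h14, ← add_div]
    simp_rw [hterm]
    rw [sumite]
    exact aux_combine (n:ℝ) ε _ _ hn0 (ne_of_gt hqt_pos) (ne_of_gt hqf_pos)
  rw [hsum1, hchi] at key
  exact key.trans (aux_final (n:ℝ) ε hN hε hε')
end

section
/- Every directed tree (a directed graph whose underlying undirected graph is a tree, with each tree edge oriented in one direction) is 1-degenerate: one can iteratively apply the two reduction operations to reach the empty graph. -/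
open Finset

/-- `OneDeg V E` holds when the directed graph with vertex set `V` and directed edge set `E`
can be reduced to the empty graph by iteratively applying, in some order:
(a) pick a vertex with in-degree exactly one and remove its unique in-edge;
(b) pick a vertex with in-degree zero and out-degree at most one, and remove the vertex
together with its out-edge (if any). This is the `1`-degeneracy of directed graphs. -/
inductive OneDeg {α : Type*} [DecidableEq α] : Finset α → Finset (α × α) → Prop
  | empty : OneDeg ∅ ∅
  | removeInEdge (V : Finset α) (E : Finset (α × α)) (u v : α)
      (hv : v ∈ V) (he : (u, v) ∈ E)
      (hdeg : (E.filter (fun e => e.2 = v)).card = 1)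
      (ih : OneDeg V (E.erase (u, v))) : OneDeg V E
  | removeVertex (V : Finset α) (E : Finset (α × α)) (v : α)
      (hv : v ∈ V)
      (hin : E.filter (fun e => e.2 = v) = ∅)
      (hout : (E.filter (fun e => e.1 = v)).card ≤ 1)
      (ih : OneDeg (V.erase v) (E.filter (fun e => e.1 ≠ v))) : OneDeg V E

/-- Main combinatorial lemma: if all edges have endpoints in `V` and every nonempty
subset `S` of `V` contains a vertex incident (within `S`) to at most one edge, then
the digraph is 1-degenerate. -/
lemma oneDeg_of_local_leaf {α : Type*} [DecidableEq α] :
    ∀ (n : ℕ) (V : Finset α) (E : Finset (α × α)), V.card + E.card ≤ n →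
    (∀ e ∈ E, e.1 ∈ V ∧ e.2 ∈ V) →
    (∀ S : Finset α, S ⊆ V → S.Nonempty →
      ∃ v ∈ S, (E.filter (fun e => e.1 ∈ S ∧ e.2 ∈ S ∧ (e.1 = v ∨ e.2 = v))).card ≤ 1) →
    OneDeg V E := by
  intro n
  induction n with
  | zero =>
    intro V E hn h1 _
    have hV : V = ∅ := Finset.card_eq_zero.mp (by omega)
    have hE : E = ∅ := Finset.card_eq_zero.mp (by omega)
    rw [hV, hE]; exact OneDeg.empty
  | succ n ih =>
    intro V E hn h1 hH
    rcases V.eq_empty_or_nonempty with hV | hV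
    · have hE : E = ∅ := by
        rcases E.eq_empty_or_nonempty with h | ⟨e, he⟩
        · exact h
        · exact absurd ((h1 e he).1) (by simp [hV])
      rw [hV, hE]; exact OneDeg.empty
    · obtain ⟨v, hvV, hvcard⟩ := hH V (le_refl _) hV
      -- in-edges and out-edges of v are inside the incident filter
      have hinsub : E.filter (fun e => e.2 = v) ⊆
          E.filter (fun e => e.1 ∈ V ∧ e.2 ∈ V ∧ (e.1 = v ∨ e.2 = v)) := by
        intro e he
        simp only [Finset.mem_filter] at he ⊢
        exact ⟨he.1, (h1 e he.1).1, (h1 e he.1).2, Or.inr he.2⟩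
      have houtsub : E.filter (fun e => e.1 = v) ⊆
          E.filter (fun e => e.1 ∈ V ∧ e.2 ∈ V ∧ (e.1 = v ∨ e.2 = v)) := by
        intro e he
        simp only [Finset.mem_filter] at he ⊢
        exact ⟨he.1, (h1 e he.1).1, (h1 e he.1).2, Or.inl he.2⟩
      have hin : (E.filter (fun e => e.2 = v)).card ≤ 1 :=
        le_trans (Finset.card_le_card hinsub) hvcard
      rcases Nat.lt_or_ge (E.filter (fun e => e.2 = v)).card 1 with hlt | hge
      · -- in-degree 0 : remove the vertex
        have hin0 : E.filter (fun e => e.2 = v) = ∅ :=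
          Finset.card_eq_zero.mp (by omega)
        have hout : (E.filter (fun e => e.1 = v)).card ≤ 1 :=
          le_trans (Finset.card_le_card houtsub) hvcard
        refine OneDeg.removeVertex V E v hvV hin0 hout ?_
        set E' := E.filter (fun e => e.1 ≠ v) with hE'
        have hE'sub : E' ⊆ E := Finset.filter_subset _ _
        refine ih (V.erase v) E' ?_ ?_ ?_
        · have h1' : (V.erase v).card < V.card := Finset.card_erase_lt_of_mem hvV
          have h2' : E'.card ≤ E.card := Finset.card_le_card hE'sub
          omega
        · intro e he
          have heE : e ∈ E := hE'sub he
          have hne1 : e.1 ≠ v := by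
            simp only [hE', Finset.mem_filter] at he; exact he.2
          have hne2 : e.2 ≠ v := by
            intro h
            have : e ∈ E.filter (fun e => e.2 = v) := Finset.mem_filter.mpr ⟨heE, h⟩
            rw [hin0] at this; exact absurd this (Finset.notMem_empty e)
          exact ⟨Finset.mem_erase.mpr ⟨hne1, (h1 e heE).1⟩,
                 Finset.mem_erase.mpr ⟨hne2, (h1 e heE).2⟩⟩
        · intro S hS hSne
          obtain ⟨w, hwS, hwcard⟩ := hH S (hS.trans (Finset.erase_subset _ _)) hSne
          exact ⟨w, hwS, le_trans (Finset.card_le_card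
            (Finset.filter_subset_filter _ hE'sub)) hwcard⟩
      · -- in-degree 1 : remove the unique in-edge
        have hcard1 : (E.filter (fun e => e.2 = v)).card = 1 := le_antisymm hin hge
        obtain ⟨e0, he0⟩ := Finset.card_eq_one.mp hcard1
        have he0mem : e0 ∈ E.filter (fun e => e.2 = v) := by rw [he0]; exact Finset.mem_singleton_self _
        have he0E : e0 ∈ E := (Finset.mem_filter.mp he0mem).1
        have he02 : e0.2 = v := (Finset.mem_filter.mp he0mem).2
        have he0eq : e0 = (e0.1, v) := by rw [← he02]
        refine OneDeg.removeInEdge V E e0.1 v hvV (he0eq ▸ he0E) hcard1 ?_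
        have hsub : E.erase (e0.1, v) ⊆ E := Finset.erase_subset _ _
        refine ih V (E.erase (e0.1, v)) ?_ ?_ ?_
        · have : (E.erase (e0.1, v)).card < E.card :=
            Finset.card_erase_lt_of_mem (he0eq ▸ he0E)
          omega
        · intro e he; exact h1 e (hsub he)
        · intro S hS hSne
          obtain ⟨w, hwS, hwcard⟩ := hH S hS hSne
          exact ⟨w, hwS, le_trans (Finset.card_le_card
            (Finset.filter_subset_filter _ hsub)) hwcard⟩

/-- Every directed tree (an orientation of an undirected tree, where each tree edge is
oriented in exactly one direction) is `1`-degenerate. -/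
theorem stmt12 {α : Type*} [Fintype α] [DecidableEq α] (G : SimpleGraph α) (hG : G.IsTree)
    (E : Finset (α × α))
    (horient : ∀ u v : α, G.Adj u v ↔ ((u, v) ∈ E ∨ (v, u) ∈ E))
    (hone : ∀ u v : α, (u, v) ∈ E → (v, u) ∉ E) :
    OneDeg (Finset.univ : Finset α) E := by
  classical
  apply oneDeg_of_local_leaf (Finset.univ.card + E.card) _ _ (le_refl _)
  · intro e _; exact ⟨Finset.mem_univ _, Finset.mem_univ _⟩
  intro S _ hSne
  obtain ⟨s, hs⟩ := hSne
  -- unique paths from s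
  have hup := hG.existsUnique_path
  set P : ∀ w : α, G.Walk s w := fun w => (hup s w).exists.choose with hPdef
  have hP : ∀ w : α, (P w).IsPath := fun w => (hup s w).exists.choose_spec
  have huniq : ∀ (w : α) (q : G.Walk s w), q.IsPath → q = P w :=
    fun w q hq => (hup s w).unique hq (hP w)
  -- pick v in S with maximal path length from s
  obtain ⟨v, hvS, hvmax⟩ := S.exists_max_image (fun w => (P w).length) ⟨s, hs⟩
  -- key: any neighbor of v inside S is the penultimate vertex of P v
  have hkey : ∀ w ∈ S, ∀ (hadj : G.Adj v w), P v = (P w).concat hadj.symm := by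
    intro w hwS hadj
    by_cases hvmem : v ∈ (P w).support
    · exfalso
      have ht : ((P w).takeUntil v hvmem).IsPath := (hP w).takeUntil hvmem
      have hteq : (P w).takeUntil v hvmem = P v := huniq v _ ht
      have hlen1 : ((P w).takeUntil v hvmem).length ≤ (P w).length :=
        (P w).length_takeUntil_le hvmem
      have hlen2 : (P w).length ≤ (P v).length := hvmax w hwS
      have hspec := (P w).take_spec hvmem
      have hlen3 := congrArg SimpleGraph.Walk.length hspec
      rw [SimpleGraph.Walk.length_append] at hlen3
      have hdrop0 : ((P w).dropUntil v hvmem).length = 0 := by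
        rw [hteq] at hlen1 hlen3
        omega
      have : v = w := SimpleGraph.Walk.eq_of_length_eq_zero hdrop0
      exact hadj.ne this
    · have hq : ((P w).concat hadj.symm).IsPath := by
        rw [← SimpleGraph.Walk.isPath_reverse_iff, SimpleGraph.Walk.reverse_concat]
        refine SimpleGraph.Walk.IsPath.cons ?_ ?_
        · rw [SimpleGraph.Walk.isPath_reverse_iff]; exact hP w
        · rw [SimpleGraph.Walk.support_reverse, List.mem_reverse]; exact hvmem
      exact (huniq v _ hq).symm
  -- hence all S-neighbors of v coincide
  have hnbr : ∀ w₁ ∈ S, ∀ w₂ ∈ S, G.Adj v w₁ → G.Adj v w₂ → w₁ = w₂ := by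
    intro w₁ h₁ w₂ h₂ ha₁ ha₂
    have e1 := hkey w₁ h₁ ha₁
    have e2 := hkey w₂ h₂ ha₂
    have := e1.symm.trans e2
    obtain ⟨hv, -⟩ := SimpleGraph.Walk.concat_inj this
    exact hv
  refine ⟨v, hvS, Finset.card_le_one.mpr ?_⟩
  -- given an edge in the filter, extract the neighbor
  have hext : ∀ e ∈ E.filter (fun e => e.1 ∈ S ∧ e.2 ∈ S ∧ (e.1 = v ∨ e.2 = v)),
      ∃ w ∈ S, G.Adj v w ∧ (e = (v, w) ∨ e = (w, v)) := by
    intro e he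
    simp only [Finset.mem_filter] at he
    obtain ⟨heE, h1S, h2S, hor⟩ := he
    rcases hor with h | h
    · refine ⟨e.2, h2S, ?_, Or.inl ?_⟩
      · exact (horient v e.2).mpr (Or.inl (by rw [← h]; simpa using heE))
      · rw [← h]
    · refine ⟨e.1, h1S, ?_, Or.inr ?_⟩
      · have : G.Adj e.1 v := (horient e.1 v).mpr (Or.inl (by rw [← h]; simpa using heE))
        exact this.symm
      · rw [← h]
  intro a haF b hbF
  obtain ⟨w₁, hw₁S, ha₁, hcase₁⟩ := hext a haF
  obtain ⟨w₂, hw₂S, ha₂, hcase₂⟩ := hext b hbF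
  have hw : w₁ = w₂ := hnbr w₁ hw₁S w₂ hw₂S ha₁ ha₂
  subst hw
  have haE : a ∈ E := (Finset.mem_filter.mp haF).1
  have hbE : b ∈ E := (Finset.mem_filter.mp hbF).1
  rcases hcase₁ with h₁ | h₁ <;> rcases hcase₂ with h₂ | h₂
  · rw [h₁, h₂]
  · exfalso; rw [h₁] at haE; rw [h₂] at hbE; exact hone v w₁ haE hbE
  · exfalso; rw [h₁] at haE; rw [h₂] at hbE; exact hone w₁ v haE hbE
  · rw [h₁, h₂]
end

section
/- Exploration-mixing variance bound: let u, X ∈ Δ_n, γ ∈ (0,1), and X̃ = (1−γ)X + γu. Suppose x* : V → [0,1] is a feasible fractional weak dominating solution with total mass δ* = Σ_i x*_i and u(i) = x*_i/δ*. Then for every vertex j ∈ U (no self-loop), X(j) / (Σ_{i ∈ N_in(j)} X̃(i)) ≤ X(j)·δ*/γ, and summing over j ∈ U gives Σ_{j∈U} X(j)/(Σ_{i∈N_in(j)} X̃(i)) ≤ δ*/γ. -/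
open Finset

/-- Exploration-mixing variance bound. Let `x*` be a feasible fractional weak dominating
solution with total mass `δ* > 0`, `u = x*/δ*` the exploration distribution, `X` a
distribution on arms, `γ ∈ (0,1)` and `X̃ = (1-γ)X + γu`. Then for every vertex `j` without
a self-loop, `X j / (∑_{i ∈ N_in(j)} X̃ i) ≤ X j · δ*/γ`, and summing over all such `j`,
`∑_{j ∈ U} X j / (∑_{i ∈ N_in(j)} X̃ i) ≤ δ*/γ`. -/
theorem stmt19 {V : Type*} [Fintype V] (E : V → V → Prop) [DecidableRel E]
    (xs : V → ℝ) (hxs : ∀ i, 0 ≤ xs i ∧ xs i ≤ 1)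
    (hfeas : ∀ j, ¬ E j j → 1 ≤ ∑ i ∈ Finset.univ.filter (fun i => E i j), xs i)
    (δstar : ℝ) (hδ : δstar = ∑ i, xs i) (hδpos : 0 < δstar)
    (u X : V → ℝ) (hu : ∀ i, u i = xs i / δstar)
    (hX0 : ∀ i, 0 ≤ X i) (hX1 : ∑ i, X i = 1)
    (γ : ℝ) (hγ : γ ∈ Set.Ioo (0 : ℝ) 1)
    (Xt : V → ℝ) (hXt : ∀ i, Xt i = (1 - γ) * X i + γ * u i) :
    (∀ j, ¬ E j j →
      X j / (∑ i ∈ Finset.univ.filter (fun i => E i j), Xt i) ≤ X j * δstar / γ) ∧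
    (∑ j ∈ Finset.univ.filter (fun j => ¬ E j j),
        X j / (∑ i ∈ Finset.univ.filter (fun i => E i j), Xt i)) ≤ δstar / γ := by
  obtain ⟨hγ0, hγ1⟩ := hγ
  have key : ∀ j, ¬ E j j → γ / δstar ≤ ∑ i ∈ Finset.univ.filter (fun i => E i j), Xt i := by
    intro j hj
    have h1 : ∑ i ∈ Finset.univ.filter (fun i => E i j), Xt i ≥
        ∑ i ∈ Finset.univ.filter (fun i => E i j), γ * u i := by
      apply Finset.sum_le_sum
      intro i _
      rw [hXt i]
      nlinarith [hX0 i, hγ1.le]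
    have h2 : ∑ i ∈ Finset.univ.filter (fun i => E i j), γ * u i =
        (γ / δstar) * ∑ i ∈ Finset.univ.filter (fun i => E i j), xs i := by
      rw [Finset.mul_sum]
      apply Finset.sum_congr rfl
      intro i _
      rw [hu i]; field_simp
    have h3 := hfeas j hj
    have : (γ / δstar) * 1 ≤ (γ / δstar) * ∑ i ∈ Finset.univ.filter (fun i => E i j), xs i :=
      mul_le_mul_of_nonneg_left h3 (by positivity)
    simp at this
    linarith
  have part1 : ∀ j, ¬ E j j →
      X j / (∑ i ∈ Finset.univ.filter (fun i => E i j), Xt i) ≤ X j * δstar / γ := by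
    intro j hj
    have hk := key j hj
    have hpos : 0 < ∑ i ∈ Finset.univ.filter (fun i => E i j), Xt i :=
      lt_of_lt_of_le (by positivity) hk
    rw [div_le_div_iff₀ hpos hγ0]
    rw [div_le_iff₀ hδpos] at hk
    nlinarith [hX0 j]
  refine ⟨part1, ?_⟩
  calc (∑ j ∈ Finset.univ.filter (fun j => ¬ E j j),
        X j / (∑ i ∈ Finset.univ.filter (fun i => E i j), Xt i))
      ≤ ∑ j ∈ Finset.univ.filter (fun j => ¬ E j j), X j * δstar / γ := by
        apply Finset.sum_le_sum
        intro j hj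
        exact part1 j (by simpa using hj)
    _ ≤ ∑ j : V, X j * δstar / γ := by
        apply Finset.sum_le_sum_of_subset_of_nonneg (Finset.filter_subset _ _)
        intro j _ _
        have := hX0 j
        positivity
    _ = δstar / γ := by
        rw [← Finset.sum_div, ← Finset.sum_mul, hX1, one_mul]
end
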